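/- The function I₀(z) e^{-z} √(2π z) converges to 1 as z → ∞; more precisely, I₀(z) e^{-z} √(2π z) = 1 + O(1/z). -/

import Mathlib

set_option maxHeartbeats 1000000
open Real Filter Asymptotics MeasureTheory Set intervalIntegral

section AuxStmt13

private lemma stmt13_tail_int (b c : ℝ) (hb : 0 < b) (hc : 0 < c) :
    IntegrableOn (fun x => x * Real.exp (-b * x^2)) (Ioi c) ∧
    ∫ s in Ioi c, s * Real.exp (-b * s^2) = Real.exp (-b*c^2)/(2*b) := by
  have hderiv : ∀ x ∈ Ici c, HasDerivAt (fun s => -Real.exp (-b*s^2)/(2*b)) (x * Real.exp (-b * x^2)) x := by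
    intro x _
    have h1 : HasDerivAt (fun s : ℝ => -b*s^2) (-b*(2*x)) x := by
      simpa using ((hasDerivAt_pow 2 x).const_mul (-b))
    have h2 := (h1.exp).neg.div_const (2*b)
    refine h2.congr_deriv ?_
    field_simp
  have hcont : ContinuousWithinAt (fun s => -Real.exp (-b*s^2)/(2*b)) (Ici c) c :=
    (Continuous.continuousWithinAt (by continuity))
  have htend : Tendsto (fun s => -Real.exp (-b*s^2)/(2*b)) atTop (nhds 0) := by
    have : Tendsto (fun s : ℝ => -b*s^2) atTop atBot := by
      apply Tendsto.const_mul_atTop_of_neg (by linarith)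
      exact tendsto_pow_atTop (by norm_num)
    have := (Real.tendsto_exp_atBot.comp this).neg.div_const (2*b)
    simpa using this
  have hint : IntegrableOn (fun x => x * Real.exp (-b * x^2)) (Ioi c) := by
    apply integrableOn_Ioi_deriv_of_nonneg hcont (fun x hx => hderiv x (mem_Ici_of_Ioi hx)) _ htend
    intro x hx
    have : (0:ℝ) < x := lt_trans hc hx
    positivity
  refine ⟨hint, ?_⟩
  have := integral_Ioi_of_hasDerivAt_of_tendsto hcont (fun x hx => hderiv x (mem_Ici_of_Ioi hx)) hint htend
  rw [this]
  ring

private lemma stmt13_tail_le (b c : ℝ) (hb : 0 < b) (hc : 0 < c) :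
    ∫ s in Ioi c, Real.exp (-b * s^2) ≤ Real.exp (-b*c^2)/(2*b*c) := by
  obtain ⟨hint, heq⟩ := stmt13_tail_int b c hb hc
  have hint1 : IntegrableOn (fun s : ℝ => Real.exp (-b*s^2)) (Ioi c) := by
    have : Integrable (fun s : ℝ => Real.exp (-b * s^2)) := by
      simpa using integrable_exp_neg_mul_sq hb
    exact this.integrableOn
  have hint2 : IntegrableOn (fun s : ℝ => (1/c) * (s * Real.exp (-b*s^2))) (Ioi c) :=
    hint.const_mul (1/c)
  have hmono := setIntegral_mono_on hint1 hint2 measurableSet_Ioi ?_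
  · calc ∫ s in Ioi c, Real.exp (-b*s^2)
        ≤ ∫ s in Ioi c, (1/c) * (s * Real.exp (-b*s^2)) := hmono
      _ = (1/c) * ∫ s in Ioi c, s * Real.exp (-b*s^2) := by
          rw [MeasureTheory.integral_const_mul]
      _ = (1/c) * (Real.exp (-b*c^2)/(2*b)) := by rw [heq]
      _ = Real.exp (-b*c^2)/(2*b*c) := by field_simp
  · intro x hx
    have hx' : c < x := hx
    have h1 : 1 ≤ x/c := (one_le_div hc).mpr hx'.le
    have := mul_le_mul_of_nonneg_right h1 (Real.exp_pos (-b*x^2)).le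
    calc Real.exp (-b*x^2) = 1 * Real.exp (-b*x^2) := (one_mul _).symm
      _ ≤ (x/c) * Real.exp (-b*x^2) := this
      _ = (1/c) * (x * Real.exp (-b*x^2)) := by ring

private lemma stmt13_tail_nonneg (b c : ℝ) :
    0 ≤ ∫ s in Ioi c, Real.exp (-b * s^2) :=
  setIntegral_nonneg measurableSet_Ioi (fun x _ => (Real.exp_pos _).le)

private lemma stmt13_split_eq (b c : ℝ) (hb : 0 < b) (hc : 0 ≤ c) :
    ∫ s in (0:ℝ)..c, Real.exp (-b * s^2)
      = Real.sqrt (π/b)/2 - ∫ s in Ioi c, Real.exp (-b * s^2) := by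
  have hint : Integrable (fun s : ℝ => Real.exp (-b * s^2)) := by
    simpa using integrable_exp_neg_mul_sq hb
  have hu : Ioc 0 c ∪ Ioi c = Ioi (0:ℝ) := Ioc_union_Ioi_eq_Ioi hc
  have hdisj : Disjoint (Ioc (0:ℝ) c) (Ioi c) := by
    rw [Set.disjoint_left]
    rintro a ⟨_, h2⟩ h3
    exact absurd h3 (not_lt.mpr h2)
  have := MeasureTheory.setIntegral_union hdisj measurableSet_Ioi
    hint.integrableOn hint.integrableOn (f := fun s => Real.exp (-b * s^2)) (μ := volume)
  rw [hu] at this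
  rw [intervalIntegral.integral_of_le hc, ← integral_gaussian_Ioi b, this]
  ring

private lemma stmt13_sqrt_bound {s : ℝ} (h1 : s^2 ≤ 1/2) :
    2 / Real.sqrt (1 - s^2) ≤ 2 + 4*s^2 := by
  have hpos : 0 < 1 - s^2 := by nlinarith [sq_nonneg s]
  have hs := Real.sq_sqrt hpos.le
  have hsp := Real.sqrt_pos.mpr hpos
  rw [div_le_iff₀ hsp]
  nlinarith [sq_nonneg ((2+4*s^2) * Real.sqrt (1-s^2) - 2), sq_nonneg (s^2), sq_nonneg s,
    Real.sqrt_nonneg (1-s^2)]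

private lemma stmt13_two_mul_le_exp {t : ℝ} (ht : 0 ≤ t) : 2*t ≤ Real.exp t := by
  have h := Real.add_one_le_exp (t/2)
  have h2 : Real.exp t = Real.exp (t/2) * Real.exp (t/2) := by
    rw [← Real.exp_add]; ring_nf
  have h0 : (0:ℝ) ≤ t/2 + 1 := by linarith
  have hsq : (t/2+1)*(t/2+1) ≤ Real.exp (t/2) * Real.exp (t/2) :=
    mul_le_mul h h h0 (Real.exp_pos _).le
  nlinarith [sq_nonneg (t/2 - 1)]

private lemma stmt13_exp_quad_bound {z s : ℝ} (hz : 0 < z) :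
    4*s^2 * Real.exp (-(2*z) * s^2) ≤ (2/z) * Real.exp (-z * s^2) := by
  have ht : 0 ≤ z * s^2 := by positivity
  have h := stmt13_two_mul_le_exp ht
  have he : Real.exp (-(2*z) * s^2) * Real.exp (z * s^2) = Real.exp (-z*s^2) := by
    rw [← Real.exp_add]; ring_nf
  have key := mul_le_mul_of_nonneg_left h (by positivity : (0:ℝ) ≤ (2/z) * Real.exp (-(2*z)*s^2))
  calc 4*s^2 * Real.exp (-(2*z) * s^2) = (2/z) * Real.exp (-(2*z)*s^2) * (2*(z*s^2)) := by
        field_simp; ring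
    _ ≤ (2/z) * Real.exp (-(2*z)*s^2) * Real.exp (z*s^2) := key
    _ = (2/z) * Real.exp (-z*s^2) := by rw [mul_assoc, he]

private lemma stmt13_exp_neg_le {z : ℝ} (hz : 1 ≤ z) : Real.exp (-z) ≤ 4 / z^2 := by
  have h := Real.add_one_le_exp (z/2)
  have h2 : Real.exp z = Real.exp (z/2) * Real.exp (z/2) := by
    rw [← Real.exp_add]; ring_nf
  have hez : z^2/4 ≤ Real.exp z := by nlinarith
  have h3 := inv_anti₀ (by positivity : (0:ℝ) < z^2/4) hez
  rw [Real.exp_neg]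
  calc (Real.exp z)⁻¹ ≤ (z^2/4)⁻¹ := h3
    _ = 4/z^2 := by field_simp

private lemma stmt13_subst (z : ℝ) :
    ∫ s in (0:ℝ)..(Real.sqrt 2 / 2), 2 / Real.sqrt (1 - s^2) * Real.exp (-(2*z) * s^2)
      = ∫ θ in (0:ℝ)..(π/2), Real.exp (z * (Real.cos θ - 1)) := by
  have c_lt : Real.sqrt 2 / 2 < 1 := by
    nlinarith [Real.sq_sqrt (by norm_num : (2:ℝ) ≥ 0), Real.sqrt_nonneg 2]
  have c_nonneg : (0:ℝ) ≤ Real.sqrt 2 / 2 := by positivity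
  have huIcc : uIcc (0:ℝ) (Real.sqrt 2 / 2) = Icc 0 (Real.sqrt 2 / 2) :=
    uIcc_of_le c_nonneg
  have h := intervalIntegral.integral_comp_smul_deriv
    (f := fun s => 2 * Real.arcsin s) (f' := fun s => 2 / Real.sqrt (1 - s^2))
    (g := fun θ => Real.exp (z * (Real.cos θ - 1))) (a := 0) (b := Real.sqrt 2 / 2)
    ?_ ?_ (by continuity)
  · have h0 : 2 * Real.arcsin 0 = 0 := by simp
    have hc : 2 * Real.arcsin (Real.sqrt 2 / 2) = π/2 := by
      rw [show Real.sqrt 2 / 2 = Real.sin (π/4) by rw [Real.sin_pi_div_four],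
        Real.arcsin_sin (by linarith [Real.pi_pos]) (by linarith [Real.pi_pos])]
      ring
    simp only [Function.comp] at h
    rw [h0, hc] at h
    rw [← h]
    apply intervalIntegral.integral_congr
    intro s hs
    rw [huIcc] at hs
    have hs1 : 0 ≤ 1 - s^2 := by nlinarith [hs.1, hs.2, c_lt]
    have hcos : Real.cos (2 * Real.arcsin s) = 1 - 2*s^2 := by
      rw [Real.cos_two_mul, Real.cos_arcsin, Real.sq_sqrt hs1]
      ring
    simp only [smul_eq_mul]
    rw [hcos]
    ring_nf
  · intro x hx
    rw [huIcc] at hx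
    have h1 : x ≠ -1 := by intro h; rw [h] at hx; linarith [hx.1]
    have h2 : x ≠ 1 := by intro h; rw [h] at hx; linarith [hx.2, c_lt]
    have := (Real.hasDerivAt_arcsin h1 h2).const_mul 2
    refine this.congr_deriv ?_
    ring
  · rw [huIcc]
    apply ContinuousOn.div continuousOn_const
    · exact (Real.continuous_sqrt.comp (by continuity)).continuousOn
    · intro x hx
      have h1 : x^2 < 1 := by nlinarith [hx.1, hx.2, c_lt]
      exact ne_of_gt (Real.sqrt_pos.mpr (by linarith : (0:ℝ) < 1 - x^2))

private lemma stmt13_main_est (z : ℝ) (hz : 1 ≤ z) :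
    |(∫ θ in (0:ℝ)..π, Real.exp (z * (Real.cos θ - 1))) - Real.sqrt (π/(2*z))|
      ≤ 10 / (z * Real.sqrt z) := by
  have hzpos : 0 < z := by linarith
  set c : ℝ := Real.sqrt 2 / 2 with hc_def
  have hc2 : c^2 = 1/2 := by
    rw [hc_def, div_pow, Real.sq_sqrt (by norm_num : (0:ℝ) ≤ 2)]; norm_num
  have hcpos : 0 < c := by rw [hc_def]; positivity
  have hc1 : c < 1 := by nlinarith [hc2, hcpos]
  have contf : Continuous (fun θ => Real.exp (z * (Real.cos θ - 1))) := by continuity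
  -- split A
  have hsplit : (∫ θ in (0:ℝ)..π, Real.exp (z * (Real.cos θ - 1)))
      = (∫ θ in (0:ℝ)..(π/2), Real.exp (z * (Real.cos θ - 1)))
        + ∫ θ in (π/2)..π, Real.exp (z * (Real.cos θ - 1)) :=
    (intervalIntegral.integral_add_adjacent_intervals
      (contf.intervalIntegrable _ _) (contf.intervalIntegrable _ _)).symm
  set B1 := ∫ θ in (π/2)..π, Real.exp (z * (Real.cos θ - 1)) with hB1_def
  have hB1low : 0 ≤ B1 := by
    apply intervalIntegral.integral_nonneg (by linarith [Real.pi_pos])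
    exact fun x _ => (Real.exp_pos _).le
  have hB1up : B1 ≤ π/2 * Real.exp (-z) := by
    have hmono := intervalIntegral.integral_mono_on (by linarith [Real.pi_pos] : π/2 ≤ π)
      (contf.intervalIntegrable _ _) (intervalIntegrable_const (μ := volume) (c := Real.exp (-z)))
      (fun x hx => by
        apply Real.exp_le_exp.mpr
        have hcx : Real.cos x ≤ 0 :=
          Real.cos_nonpos_of_pi_div_two_le_of_le hx.1 (by linarith [Real.pi_pos, hx.2])
        nlinarith)
    rw [intervalIntegral.integral_const, smul_eq_mul] at hmono
    calc B1 ≤ (π - π/2) * Real.exp (-z) := hmono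
      _ = π/2 * Real.exp (-z) := by ring
  -- substitution
  set I1 := ∫ θ in (0:ℝ)..(π/2), Real.exp (z * (Real.cos θ - 1)) with hI1_def
  have hsub : I1 = ∫ s in (0:ℝ)..c, 2 / Real.sqrt (1 - s^2) * Real.exp (-(2*z) * s^2) :=
    (stmt13_subst z).symm
  -- integrability facts on [0,c]
  have hcontOn : ContinuousOn (fun s => 2 / Real.sqrt (1 - s^2) * Real.exp (-(2*z) * s^2))
      (uIcc (0:ℝ) c) := by
    rw [uIcc_of_le hcpos.le]
    apply ContinuousOn.mul
    · apply ContinuousOn.div continuousOn_const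
      · exact (Real.continuous_sqrt.comp (by continuity)).continuousOn
      · intro x hx
        have h1 : x^2 < 1 := by nlinarith [hx.1, hx.2, hc1]
        exact ne_of_gt (Real.sqrt_pos.mpr (by linarith : (0:ℝ) < 1 - x^2))
    · exact (Continuous.continuousOn (by continuity))
  have hii : IntervalIntegrable (fun s => 2 / Real.sqrt (1 - s^2) * Real.exp (-(2*z) * s^2))
      volume 0 c := hcontOn.intervalIntegrable
  have hc2z : Continuous (fun s : ℝ => 2 * Real.exp (-(2*z) * s^2)) :=
    continuous_const.mul ((continuous_const.mul (continuous_pow 2)).rexp)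
  have hcz : Continuous (fun s : ℝ => (2/z) * Real.exp (-z * s^2)) :=
    continuous_const.mul ((continuous_const.mul (continuous_pow 2)).rexp)
  have hii2 : IntervalIntegrable (fun s : ℝ => 2 * Real.exp (-(2*z) * s^2)) volume 0 c :=
    hc2z.intervalIntegrable 0 c
  have hii3 : IntervalIntegrable
      (fun s : ℝ => 2 * Real.exp (-(2*z) * s^2) + (2/z) * Real.exp (-z * s^2)) volume 0 c :=
    (hc2z.add hcz).intervalIntegrable 0 c
  have hii4 : IntervalIntegrable (fun s : ℝ => (2/z) * Real.exp (-z * s^2)) volume 0 c :=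
    hcz.intervalIntegrable 0 c
  -- pointwise facts on Icc 0 c
  have hptIcc : ∀ x ∈ Icc (0:ℝ) c, x^2 ≤ 1/2 := by
    intro x hx
    nlinarith [hx.1, hx.2, hc2]
  -- lower bound for I1
  have hlow : (∫ s in (0:ℝ)..c, 2 * Real.exp (-(2*z) * s^2)) ≤ I1 := by
    rw [hsub]
    apply intervalIntegral.integral_mono_on hcpos.le hii2 hii
    intro x hx
    have h1 : x^2 < 1 := by nlinarith [hx.1, hx.2, hc1]
    have hsp : 0 < Real.sqrt (1 - x^2) := Real.sqrt_pos.mpr (by linarith)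
    have hs1 : Real.sqrt (1 - x^2) ≤ 1 := sqrt_le_one.mpr (by nlinarith [hx.1] : 1 - x^2 ≤ 1)
    have h2 : 2 ≤ 2 / Real.sqrt (1 - x^2) := by
      rw [le_div_iff₀ hsp]; nlinarith
    exact mul_le_mul_of_nonneg_right h2 (Real.exp_pos _).le
  -- upper bound for I1
  have hup : I1 ≤ ∫ s in (0:ℝ)..c,
      (2 * Real.exp (-(2*z) * s^2) + (2/z) * Real.exp (-z * s^2)) := by
    rw [hsub]
    apply intervalIntegral.integral_mono_on hcpos.le hii hii3
    intro x hx
    have hx2 := hptIcc x hx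
    have hsb := stmt13_sqrt_bound hx2
    have hqb := stmt13_exp_quad_bound (z := z) (s := x) hzpos
    have hE := (Real.exp_pos (-(2*z) * x^2)).le
    calc 2 / Real.sqrt (1 - x^2) * Real.exp (-(2*z) * x^2)
        ≤ (2 + 4*x^2) * Real.exp (-(2*z) * x^2) := mul_le_mul_of_nonneg_right hsb hE
      _ = 2 * Real.exp (-(2*z) * x^2) + 4*x^2 * Real.exp (-(2*z) * x^2) := by ring
      _ ≤ 2 * Real.exp (-(2*z) * x^2) + (2/z) * Real.exp (-z * x^2) := by linarith
  -- evaluate the gaussian pieces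
  have h2z : (0:ℝ) < 2*z := by linarith
  have hgauss1 : (∫ s in (0:ℝ)..c, 2 * Real.exp (-(2*z) * s^2))
      = Real.sqrt (π/(2*z)) - 2 * ∫ s in Ioi c, Real.exp (-(2*z) * s^2) := by
    rw [intervalIntegral.integral_const_mul, stmt13_split_eq (2*z) c h2z hcpos.le]
    ring
  have hgauss2 : (∫ s in (0:ℝ)..c, (2 * Real.exp (-(2*z) * s^2) + (2/z) * Real.exp (-z * s^2)))
      = (∫ s in (0:ℝ)..c, 2 * Real.exp (-(2*z) * s^2))
        + (2/z) * ∫ s in (0:ℝ)..c, Real.exp (-z * s^2) := by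
    rw [intervalIntegral.integral_add hii2 hii4, intervalIntegral.integral_const_mul,
      intervalIntegral.integral_const_mul]
  -- tail bounds
  set T := ∫ s in Ioi c, Real.exp (-(2*z) * s^2) with hT_def
  have hTnonneg : 0 ≤ T := stmt13_tail_nonneg _ _
  have hTle : T ≤ Real.exp (-z) / (2*z) := by
    have := stmt13_tail_le (2*z) c h2z hcpos
    have harg : -(2*z)*c^2 = -z := by rw [hc2]; ring
    rw [harg] at this
    have h2c : 1 ≤ 2*c := by nlinarith [hc2, hcpos, sq_nonneg (2*c-1)]
    have hden : 2*z ≤ 2*(2*z)*c := by nlinarith [hzpos, h2c]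
    have hstep : Real.exp (-z) / (2*(2*z)*c) ≤ Real.exp (-z) / (2*z) := by
      gcongr
    linarith
  have hsmall : (∫ s in (0:ℝ)..c, Real.exp (-z * s^2)) ≤ Real.sqrt (π/z)/2 := by
    rw [stmt13_split_eq z c hzpos hcpos.le]
    linarith [stmt13_tail_nonneg z c]
  -- numeric combination
  set G := Real.sqrt (π/(2*z)) with hG_def
  have hsqzpos : 0 < Real.sqrt z := Real.sqrt_pos.mpr hzpos
  have hsqz1 : 1 ≤ Real.sqrt z := by
    nlinarith [Real.sq_sqrt hzpos.le, Real.sqrt_nonneg z]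
  have hsqz : Real.sqrt z ≤ z := by
    nlinarith [Real.sq_sqrt hzpos.le, hsqz1]
  have hexpz := stmt13_exp_neg_le hz
  have hsqrtpiz : Real.sqrt (π/z) ≤ 2 / Real.sqrt z := by
    rw [show π/z = π * (1/z) by ring, Real.sqrt_mul Real.pi_pos.le]
    have h4 : Real.sqrt π ≤ 2 := by
      rw [show (2:ℝ) = Real.sqrt 4 by
        rw [show (4:ℝ) = 2^2 by norm_num, Real.sqrt_sq]; norm_num]
      exact Real.sqrt_le_sqrt (by linarith [Real.pi_le_four])
    have h5 : Real.sqrt (1/z) = 1 / Real.sqrt z := by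
      rw [one_div, Real.sqrt_inv, one_div]
    rw [h5]
    calc Real.sqrt π * (1/Real.sqrt z) ≤ 2 * (1/Real.sqrt z) :=
          mul_le_mul_of_nonneg_right h4 (by positivity)
      _ = 2 / Real.sqrt z := by ring
  have hzsz : 0 < z * Real.sqrt z := by positivity
  rw [hgauss1] at hlow
  rw [hgauss2, hgauss1] at hup
  have m1 : 2*T ≤ Real.exp (-z)/z := by
    calc 2*T ≤ 2*(Real.exp (-z)/(2*z)) := by linarith
      _ = Real.exp (-z)/z := by field_simp
  have m2 : Real.exp (-z)/z ≤ 4/(z*Real.sqrt z) := by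
    have hd1 : Real.exp (-z)/z ≤ (4/z^2)/z := by gcongr
    have hd2 : (4:ℝ)/z^2/z = 4/(z^2*z) := by ring
    have hd3 : z*Real.sqrt z ≤ z^2*z := by nlinarith
    have hd4 : (4:ℝ)/(z^2*z) ≤ 4/(z*Real.sqrt z) :=
      div_le_div_of_nonneg_left (by norm_num) hzsz hd3
    linarith
  have m3 : (2/z) * (∫ s in (0:ℝ)..c, Real.exp (-z * s^2)) ≤ 2/(z*Real.sqrt z) := by
    calc (2/z) * (∫ s in (0:ℝ)..c, Real.exp (-z * s^2)) ≤ (2/z)*(Real.sqrt (π/z)/2) :=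
          mul_le_mul_of_nonneg_left hsmall (by positivity)
      _ = Real.sqrt (π/z)/z := by ring
      _ ≤ (2/Real.sqrt z)/z := by gcongr
      _ = 2/(z*Real.sqrt z) := by rw [div_div, mul_comm]
  have m4 : π/2 * Real.exp (-z) ≤ 8/(z*Real.sqrt z) := by
    have hq1 : π/2 * Real.exp (-z) ≤ 2 * (4/z^2) :=
      mul_le_mul (by linarith [Real.pi_le_four]) hexpz (Real.exp_pos _).le (by norm_num)
    have hq2 : (2:ℝ)*(4/z^2) = 8/(z*z) := by ring
    have hq3 : z*Real.sqrt z ≤ z*z := by nlinarith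
    have hq4 : (8:ℝ)/(z*z) ≤ 8/(z*Real.sqrt z) :=
      div_le_div_of_nonneg_left (by norm_num) hzsz hq3
    linarith
  rw [hsplit]
  rw [abs_le]
  have m7 : (10:ℝ)/(z*Real.sqrt z) = 4/(z*Real.sqrt z) + 6/(z*Real.sqrt z) := by ring
  have m8 : (2:ℝ)/(z*Real.sqrt z) + 8/(z*Real.sqrt z) = 10/(z*Real.sqrt z) := by ring
  have m9 : (0:ℝ) ≤ 6/(z*Real.sqrt z) := by positivity
  constructor
  · linarith [hlow, hB1low, m1, m2]
  · linarith [hup, hB1up, m3, m4, hTnonneg]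

end AuxStmt13

/-- With `I₀(z) = (1/π) ∫_0^π e^{z cos θ} dθ` the modified Bessel function of
order zero, we have `I₀(z) e^{-z} √(2πz) = 1 + O(1/z)` as `z → ∞`. -/
theorem stmt13 :
    (fun z : ℝ =>
        ((1 / π) * ∫ θ in (0:ℝ)..π, Real.exp (z * Real.cos θ)) * Real.exp (-z)
          * Real.sqrt (2 * π * z) - 1)
      =O[atTop] (fun z : ℝ => 1 / z) := by
  rw [isBigO_iff]
  refine ⟨10, ?_⟩
  filter_upwards [eventually_ge_atTop (1:ℝ)] with z hz
  have hzpos : 0 < z := by linarith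
  have hπ : (0:ℝ) < π := Real.pi_pos
  have hA : (∫ θ in (0:ℝ)..π, Real.exp (z * Real.cos θ)) * Real.exp (-z)
      = ∫ θ in (0:ℝ)..π, Real.exp (z * (Real.cos θ - 1)) := by
    rw [← intervalIntegral.integral_mul_const]
    apply intervalIntegral.integral_congr
    intro x _
    simp only [← Real.exp_add]
    ring_nf
  set A := ∫ θ in (0:ℝ)..π, Real.exp (z * (Real.cos θ - 1)) with hA_def
  set G := Real.sqrt (π/(2*z)) with hG_def
  have hGπ : G * Real.sqrt (2*π*z) = π := by
    rw [hG_def, ← Real.sqrt_mul (by positivity : (0:ℝ) ≤ π/(2*z))]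
    rw [show π/(2*z) * (2*π*z) = π^2 by field_simp]
    exact Real.sqrt_sq Real.pi_pos.le
  have hexpr : (1/π) * (∫ θ in (0:ℝ)..π, Real.exp (z * Real.cos θ)) * Real.exp (-z)
        * Real.sqrt (2*π*z) - 1
      = (A - G) * Real.sqrt (2*π*z) / π := by
    have h0 : (1/π) * (∫ θ in (0:ℝ)..π, Real.exp (z * Real.cos θ)) * Real.exp (-z)
        = (1/π) * A := by rw [mul_assoc, hA]
    rw [h0]
    have h1 : (A - G) * Real.sqrt (2*π*z) = A * Real.sqrt (2*π*z) - π := by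
      rw [sub_mul, hGπ]
    rw [h1, sub_div]
    rw [div_self (ne_of_gt hπ)]
    ring
  have hest := stmt13_main_est z hz
  rw [← hG_def] at hest
  have hsqz : (0:ℝ) < Real.sqrt z := Real.sqrt_pos.mpr hzpos
  have hsqrt2pz : Real.sqrt (2*π*z) ≤ π * Real.sqrt z := by
    rw [show 2*π*z = (2*π)*z by ring, Real.sqrt_mul (by positivity)]
    have hp : Real.sqrt (2*π) ≤ π := by
      have h2 : 2*π ≤ π^2 := by nlinarith [Real.pi_gt_three]
      calc Real.sqrt (2*π) ≤ Real.sqrt (π^2) := Real.sqrt_le_sqrt h2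
        _ = π := Real.sqrt_sq Real.pi_pos.le
    exact mul_le_mul_of_nonneg_right hp (Real.sqrt_nonneg z)
  have hnorm : |(A - G) * Real.sqrt (2*π*z) / π| ≤ 10 / z := by
    rw [abs_div, abs_mul, abs_of_pos hπ, abs_of_nonneg (Real.sqrt_nonneg _)]
    calc |A - G| * Real.sqrt (2*π*z) / π
        ≤ (10/(z*Real.sqrt z)) * (π * Real.sqrt z) / π := by
          gcongr
      _ = 10 / z := by
          field_simp
  rw [hexpr]
  rw [Real.norm_eq_abs, Real.norm_eq_abs, abs_of_pos (by positivity : (0:ℝ) < 1/z)]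
  calc |(A - G) * Real.sqrt (2*π*z) / π| ≤ 10 / z := hnorm
    _ = 10 * (1/z) := by ring
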